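/- The Neumann form Q^{(N)}, defined as the restriction of Q̃ to D(Q^{(N)}) = D̃ ∩ ℓ²(V,m), is a Dirichlet form on ℓ²(V,m): it is a nonnegative, closed, symmetric bilinear form with dense domain satisfying the Markov property Q^{(N)}(C∘u) ≤ Q^{(N)}(u) for every normal contraction C. -/

import Mathlib

open scoped ENNReal NNReal BigOperators
open MeasureTheory Filter

/-- A weighted graph `(b,c)` over a vertex set `V`. -/
structure WeightedGraph (V : Type*) where
  b : V → V → ℝ
  c : V → ℝ
  b_nonneg : ∀ x y, 0 ≤ b x y
  b_diag : ∀ x, b x x = 0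
  b_symm : ∀ x y, b x y = b y x
  b_summable : ∀ x, Summable fun y => b x y
  c_nonneg : ∀ x, 0 ≤ c x

/-- Membership in `ℓ²(V,m)`. -/
def MemL2 {V : Type*} (m : V → ℝ) (u : V → ℝ) : Prop :=
  Summable fun x => u x ^ 2 * m x

/-- The inner product of `ℓ²(V,m)`. -/
noncomputable def l2inner {V : Type*} (m : V → ℝ) (u v : V → ℝ) : ℝ :=
  ∑' x, u x * v x * m x

namespace WeightedGraph

variable {V : Type*} (G : WeightedGraph V)

/-- The energy functional `Q̃` with values in `[0,∞]`. -/
noncomputable def energy (u : V → ℝ) : ℝ≥0∞ :=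
  (1 / 2) * ∑' p : V × V, ENNReal.ofReal (G.b p.1 p.2 * (u p.1 - u p.2) ^ 2)
    + ∑' x, ENNReal.ofReal (G.c x * u x ^ 2)

/-- The functions of finite energy (`D̃`). -/
def FiniteEnergy (u : V → ℝ) : Prop := G.energy u < ⊤

/-- The real-valued bilinear energy form (meaningful on functions of finite energy). -/
noncomputable def energyBilin (u v : V → ℝ) : ℝ :=
  (1 / 2) * ∑' p : V × V, G.b p.1 p.2 * (u p.1 - u p.2) * (v p.1 - v p.2)
    + ∑' x, G.c x * u x * v x

/-- The generalized vertex degree. -/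
noncomputable def deg (x : V) : ℝ := (∑' y, G.b x y) + G.c x

/-- The formal Laplacian `L̃` associated with `(b,c)` and the measure `m`. -/
noncomputable def formalL (m : V → ℝ) (u : V → ℝ) (x : V) : ℝ :=
  ((∑' y, G.b x y * (u x - u y)) + G.c x * u x) / m x

/-- Connectedness of the weighted graph: any two vertices are joined by a path of edges. -/
def Connected : Prop :=
  ∀ x y : V, ∃ (n : ℕ) (p : ℕ → V), p 0 = x ∧ p n = y ∧ ∀ i < n, 0 < G.b (p i) (p (i + 1))

/-- The squared distance of the Yamasaki space with base point `o`. -/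
noncomputable def ydistSq (o : V) (u v : V → ℝ) : ℝ :=
  (G.energy (fun x => u x - v x)).toReal + (u o - v o) ^ 2

/-- The domain of the regular Dirichlet form `Q^(D)`: the closure of the finitely
supported functions in `D̃ ∩ ℓ²(V,m)` with respect to the form norm. -/
def regDom (m : V → ℝ) : Set (V → ℝ) :=
  {u | G.FiniteEnergy u ∧ MemL2 m u ∧
    ∃ f : ℕ → V → ℝ, (∀ n, (Function.support (f n)).Finite) ∧
      Filter.Tendsto
        (fun n => (G.energy (fun x => u x - f n x)).toReal + ∑' x, (u x - f n x) ^ 2 * m x)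
        Filter.atTop (nhds 0)}

/-- Transience of a Dirichlet form given by its domain: existence of a strictly positive
reference function `g ∈ ℓ¹(V,m) ∩ ℓ^∞(V)` with `⟨|u|,g⟩ ≤ Q(u)^{1/2}` on the domain. -/
def FormTransient (m : V → ℝ) (dom : Set (V → ℝ)) : Prop :=
  ∃ g : V → ℝ, (∀ x, 0 < g x) ∧ (Summable fun x => g x * m x) ∧ (∃ C, ∀ x, g x ≤ C) ∧
    ∀ u ∈ dom, ∑' x, |u x| * g x * m x ≤ Real.sqrt (G.energyBilin u u)

end WeightedGraph

/-- The data of a Dirichlet form `Q` associated with a weighted graph `(b,c)` on `ℓ²(V,m)`,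
together with its semigroup `T t = e^{-tL}` and resolvent `R α = (L+α)^{-1}`, with the
standard properties: `Q` is a restriction of `Q̃` with `D(Q^(D)) ⊆ D(Q) ⊆ D(Q^(N))`,
the semigroup is symmetric, Markovian, positivity preserving, the resolvent is characterized
by the form, and the resolvent is the Laplace transform of the semigroup. -/
structure FormSetup {V : Type*} (G : WeightedGraph V) (m : V → ℝ) where
  dom : Set (V → ℝ)
  dom_fe : ∀ u ∈ dom, G.FiniteEnergy u
  dom_l2 : ∀ u ∈ dom, MemL2 m u
  reg_sub : G.regDom m ⊆ dom
  T : ℝ → (V → ℝ) → V → ℝ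
  R : ℝ → (V → ℝ) → V → ℝ
  T_linear : ∀ t, IsLinearMap ℝ (T t)
  R_linear : ∀ α, IsLinearMap ℝ (R α)
  T_semigroup : ∀ s t : ℝ, 0 < s → 0 < t → ∀ f, T (s + t) f = T s (T t f)
  T_l2 : ∀ t : ℝ, 0 < t → ∀ f, MemL2 m f → MemL2 m (T t f)
  T_symm : ∀ t : ℝ, 0 < t → ∀ f g, MemL2 m f → MemL2 m g →
    l2inner m (T t f) g = l2inner m f (T t g)
  T_contraction : ∀ t : ℝ, 0 < t → ∀ f, MemL2 m f →
    ∑' x, T t f x ^ 2 * m x ≤ ∑' x, f x ^ 2 * m x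
  T_pos : ∀ t : ℝ, 0 < t → ∀ f, (∀ x, 0 ≤ f x) → ∀ x, 0 ≤ T t f x
  T_markov : ∀ t : ℝ, 0 < t → ∀ f, (∀ x, 0 ≤ f x ∧ f x ≤ 1) →
    ∀ x, 0 ≤ T t f x ∧ T t f x ≤ 1
  T_cont : ∀ f, MemL2 m f → ∀ x, ContinuousOn (fun t => T t f x) (Set.Ioi (0 : ℝ))
  R_mem : ∀ α : ℝ, 0 < α → ∀ f, MemL2 m f → R α f ∈ dom
  R_pos : ∀ α : ℝ, 0 < α → ∀ f, (∀ x, 0 ≤ f x) → ∀ x, 0 ≤ R α f x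
  R_char : ∀ α : ℝ, 0 < α → ∀ f, MemL2 m f → ∀ v ∈ dom,
    G.energyBilin (R α f) v + α * l2inner m (R α f) v = l2inner m f v
  R_laplace : ∀ α : ℝ, 0 < α → ∀ f, MemL2 m f → (∀ x, 0 ≤ f x) → ∀ y,
    ENNReal.ofReal (R α f y) =
      ∫⁻ t in Set.Ioi (0 : ℝ), ENNReal.ofReal (Real.exp (-α * t) * T t f y)

namespace FormSetup

variable {V : Type*} {G : WeightedGraph V} {m : V → ℝ}

open scoped Classical in
/-- The Green function `G(x,y) = ∫₀^∞ (e^{-tL} δ_x)(y) dt`, with values in `[0,∞]`. -/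
noncomputable def green (S : FormSetup G m) (x y : V) : ℝ≥0∞ :=
  ∫⁻ t in Set.Ioi (0 : ℝ), ENNReal.ofReal (S.T t (fun z => if z = x then 1 else 0) y)

/-- The extended Dirichlet space `D(Q)_e`: functions which are pointwise limits of
`Q`-Cauchy sequences from `D(Q)`. -/
def extDom (S : FormSetup G m) : Set (V → ℝ) :=
  {u | ∃ f : ℕ → V → ℝ, (∀ n, f n ∈ S.dom) ∧
    (∀ ε > (0 : ℝ), ∃ N, ∀ p ≥ N, ∀ q ≥ N,
      G.energyBilin (fun x => f p x - f q x) (fun x => f p x - f q x) < ε) ∧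
    ∀ x, Filter.Tendsto (fun n => f n x) Filter.atTop (nhds (u x))}

/-- Stochastic completeness: the resolvent `(L+1)^{-1}`, extended to `ℓ^∞(V)` by monotone
limits, maps the constant function `1` to `1`. -/
def StochComplete (S : FormSetup G m) : Prop :=
  ∀ f : ℕ → V → ℝ, (∀ n, MemL2 m (f n)) →
    (∀ n x, 0 ≤ f n x ∧ f n x ≤ f (n + 1) x ∧ f n x ≤ 1) →
    (∀ x, Filter.Tendsto (fun n => f n x) Filter.atTop (nhds 1)) →
    ∀ x, Filter.Tendsto (fun n => S.R 1 (f n) x) Filter.atTop (nhds 1)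

end FormSetup

section NeumannHelpers

variable {V : Type*}

/-- The first (edge) part of the energy. -/
noncomputable def WeightedGraph.e1 (G : WeightedGraph V) (u : V → ℝ) : ℝ≥0∞ :=
  ∑' p : V × V, ENNReal.ofReal (G.b p.1 p.2 * (u p.1 - u p.2) ^ 2)

/-- The second (killing) part of the energy. -/
noncomputable def WeightedGraph.e2 (G : WeightedGraph V) (u : V → ℝ) : ℝ≥0∞ :=
  ∑' x : V, ENNReal.ofReal (G.c x * u x ^ 2)

lemma WeightedGraph.energy_eq (G : WeightedGraph V) (u : V → ℝ) :
    G.energy u = (1 / 2) * G.e1 u + G.e2 u := rfl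

lemma summable_of_tsum_ofReal_ne_top {ι : Type*} {f : ι → ℝ} (hf : ∀ i, 0 ≤ f i)
    (h : ∑' i, ENNReal.ofReal (f i) ≠ ⊤) : Summable f :=
  (ENNReal.summable_toReal h).congr fun i => ENNReal.toReal_ofReal (hf i)

lemma tsum_ofReal_eq {ι : Type*} {f : ι → ℝ} (hf : ∀ i, 0 ≤ f i) (h : Summable f) :
    ∑' i, ENNReal.ofReal (f i) = ENNReal.ofReal (∑' i, f i) :=
  (ENNReal.ofReal_tsum_of_nonneg hf h).symm

lemma WeightedGraph.e1_ne_top (G : WeightedGraph V) {u : V → ℝ} (h : G.FiniteEnergy u) :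
    G.e1 u ≠ ⊤ := by
  intro htop
  have : G.energy u = ⊤ := by
    rw [G.energy_eq, htop]
    rw [ENNReal.mul_top (by norm_num)]
    simp
  exact absurd this (by simpa [WeightedGraph.FiniteEnergy, lt_top_iff_ne_top] using h)

lemma WeightedGraph.e2_ne_top (G : WeightedGraph V) {u : V → ℝ} (h : G.FiniteEnergy u) :
    G.e2 u ≠ ⊤ := by
  intro htop
  have : G.energy u = ⊤ := by rw [G.energy_eq, htop, add_top]
  exact absurd this (by simpa [WeightedGraph.FiniteEnergy, lt_top_iff_ne_top] using h)

lemma WeightedGraph.finiteEnergy_of_parts (G : WeightedGraph V) {u : V → ℝ}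
    (h1 : G.e1 u ≠ ⊤) (h2 : G.e2 u ≠ ⊤) : G.FiniteEnergy u := by
  rw [WeightedGraph.FiniteEnergy, G.energy_eq]
  exact ENNReal.add_lt_top.2 ⟨ENNReal.mul_lt_top (by norm_num) h1.lt_top, h2.lt_top⟩

lemma WeightedGraph.summable_e1 (G : WeightedGraph V) {u : V → ℝ} (h : G.FiniteEnergy u) :
    Summable fun p : V × V => G.b p.1 p.2 * (u p.1 - u p.2) ^ 2 :=
  summable_of_tsum_ofReal_ne_top
    (fun p => mul_nonneg (G.b_nonneg _ _) (sq_nonneg _)) (G.e1_ne_top h)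

lemma WeightedGraph.summable_e2 (G : WeightedGraph V) {u : V → ℝ} (h : G.FiniteEnergy u) :
    Summable fun x => G.c x * u x ^ 2 :=
  summable_of_tsum_ofReal_ne_top
    (fun x => mul_nonneg (G.c_nonneg _) (sq_nonneg _)) (G.e2_ne_top h)

/-- Energy of a difference is at most twice the sum of energies. -/
lemma WeightedGraph.energy_sub_le (G : WeightedGraph V) (u v : V → ℝ) :
    G.energy (fun x => u x - v x) ≤ 2 * G.energy u + 2 * G.energy v := by
  have hof2 : ∀ r : ℝ, ENNReal.ofReal (2 * r) = 2 * ENNReal.ofReal r := by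
    intro r
    rw [ENNReal.ofReal_mul (by norm_num)]
    norm_num
  have h1 : G.e1 (fun x => u x - v x) ≤ 2 * G.e1 u + 2 * G.e1 v := by
    calc G.e1 (fun x => u x - v x)
        ≤ ∑' p : V × V, (2 * ENNReal.ofReal (G.b p.1 p.2 * (u p.1 - u p.2) ^ 2)
            + 2 * ENNReal.ofReal (G.b p.1 p.2 * (v p.1 - v p.2) ^ 2)) := by
          refine ENNReal.tsum_le_tsum fun p => ?_
          show ENNReal.ofReal (G.b p.1 p.2 * ((u p.1 - v p.1) - (u p.2 - v p.2)) ^ 2) ≤ _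
          have hb := G.b_nonneg p.1 p.2
          rw [← hof2, ← hof2, ← ENNReal.ofReal_add
            (mul_nonneg (by norm_num) (mul_nonneg hb (sq_nonneg (u p.1 - u p.2))))
            (mul_nonneg (by norm_num) (mul_nonneg hb (sq_nonneg (v p.1 - v p.2))))]
          refine ENNReal.ofReal_le_ofReal ?_
          nlinarith [mul_nonneg hb (sq_nonneg ((u p.1 - u p.2) + (v p.1 - v p.2)))]
      _ = 2 * G.e1 u + 2 * G.e1 v := by
          rw [ENNReal.tsum_add, ENNReal.tsum_mul_left, ENNReal.tsum_mul_left]; rfl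
  have h2 : G.e2 (fun x => u x - v x) ≤ 2 * G.e2 u + 2 * G.e2 v := by
    calc G.e2 (fun x => u x - v x)
        ≤ ∑' x : V, (2 * ENNReal.ofReal (G.c x * u x ^ 2)
            + 2 * ENNReal.ofReal (G.c x * v x ^ 2)) := by
          refine ENNReal.tsum_le_tsum fun x => ?_
          show ENNReal.ofReal (G.c x * (u x - v x) ^ 2) ≤ _
          have hc := G.c_nonneg x
          rw [← hof2, ← hof2, ← ENNReal.ofReal_add
            (mul_nonneg (by norm_num) (mul_nonneg hc (sq_nonneg (u x))))
            (mul_nonneg (by norm_num) (mul_nonneg hc (sq_nonneg (v x))))]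
          refine ENNReal.ofReal_le_ofReal ?_
          nlinarith [mul_nonneg hc (sq_nonneg (u x + v x))]
      _ = 2 * G.e2 u + 2 * G.e2 v := by
          rw [ENNReal.tsum_add, ENNReal.tsum_mul_left, ENNReal.tsum_mul_left]; rfl
  calc G.energy (fun x => u x - v x)
      = (1 / 2) * G.e1 (fun x => u x - v x) + G.e2 (fun x => u x - v x) := G.energy_eq _
    _ ≤ (1 / 2) * (2 * G.e1 u + 2 * G.e1 v) + (2 * G.e2 u + 2 * G.e2 v) :=
        add_le_add (mul_le_mul_right h1 _) h2
    _ = 2 * ((1 / 2) * G.e1 u + G.e2 u) + 2 * ((1 / 2) * G.e1 v + G.e2 v) := by ring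
    _ = 2 * G.energy u + 2 * G.energy v := by rw [← G.energy_eq, ← G.energy_eq]

lemma WeightedGraph.finiteEnergy_sub (G : WeightedGraph V) {u v : V → ℝ}
    (hu : G.FiniteEnergy u) (hv : G.FiniteEnergy v) :
    G.FiniteEnergy (fun x => u x - v x) :=
  lt_of_le_of_lt (G.energy_sub_le u v)
    (ENNReal.add_lt_top.2 ⟨ENNReal.mul_lt_top (by norm_num) hu,
      ENNReal.mul_lt_top (by norm_num) hv⟩)

lemma memL2_sub {m : V → ℝ} (hm : ∀ x, 0 < m x) {u v : V → ℝ}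
    (hu : MemL2 m u) (hv : MemL2 m v) : MemL2 m (fun x => u x - v x) := by
  refine Summable.of_nonneg_of_le (fun x => mul_nonneg (sq_nonneg _) (hm x).le)
    (fun x => ?_) ((hu.mul_left 2).add (hv.mul_left 2))
  show (u x - v x) ^ 2 * m x ≤ _
  nlinarith [mul_nonneg (sq_nonneg (u x + v x)) (hm x).le]

/-- Fatou's lemma for countable sums in `ℝ≥0∞`. -/
lemma tsum_liminf_le_liminf_tsum {ι : Type*} (f : ℕ → ι → ℝ≥0∞) :
    ∑' i, Filter.atTop.liminf (fun n => f n i)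
      ≤ Filter.atTop.liminf fun n => ∑' i, f n i := by
  letI : MeasurableSpace ι := ⊤
  haveI : MeasurableSingletonClass ι := ⟨fun _ => MeasurableSpace.measurableSet_top⟩
  have hmeas : ∀ n, Measurable (f n) := fun n _ _ => MeasurableSpace.measurableSet_top
  calc ∑' i, Filter.atTop.liminf (fun n => f n i)
      = ∫⁻ i, Filter.atTop.liminf (fun n => f n i) ∂Measure.count :=
        (MeasureTheory.lintegral_count _).symm
    _ ≤ Filter.atTop.liminf fun n => ∫⁻ i, f n i ∂Measure.count :=
        MeasureTheory.lintegral_liminf_le hmeas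
    _ = Filter.atTop.liminf fun n => ∑' i, f n i := by
        simp only [MeasureTheory.lintegral_count]

/-- Finitely supported functions have finite energy. -/
lemma WeightedGraph.finiteEnergy_of_finite_support (G : WeightedGraph V) (u : V → ℝ)
    (h : (Function.support u).Finite) : G.FiniteEnergy u := by
  classical
  set F := h.toFinset with hF
  have hFmem : ∀ x, x ∉ F → u x = 0 := by
    intro x hx
    by_contra h0
    exact hx (h.mem_toFinset.2 h0)
  set M : ℝ := (∑ x ∈ F, u x ^ 2) + 1 with hM
  have hM0 : 0 < M := by rw [hM]; positivity
  have hMle : ∀ x, u x ^ 2 ≤ M := by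
    intro x
    by_cases hx : x ∈ F
    · have : u x ^ 2 ≤ ∑ y ∈ F, u y ^ 2 :=
        Finset.single_le_sum (fun y _ => sq_nonneg (u y)) hx
      linarith
    · rw [hFmem x hx, hM]
      have : (0:ℝ) ≤ ∑ y ∈ F, u y ^ 2 := Finset.sum_nonneg fun y _ => sq_nonneg _
      nlinarith
  -- auxiliary: a sum over pairs with first coordinate in F is finite
  have aux : ∀ (b' : V → V → ℝ), (∀ x y, 0 ≤ b' x y) → (∀ x, Summable (b' x)) →
      (∑' p : V × V, if p.1 ∈ F then ENNReal.ofReal (4 * M * b' p.1 p.2) else 0) < ⊤ := by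
    intro b' hb0 hbs
    rw [ENNReal.tsum_prod']
    have hrw : ∀ x : V, (∑' y, if x ∈ F then ENNReal.ofReal (4 * M * b' x y) else 0)
        = if x ∈ F then ENNReal.ofReal (4 * M) * ENNReal.ofReal (∑' y, b' x y) else 0 := by
      intro x
      by_cases hx : x ∈ F
      · simp only [hx, if_true]
        calc (∑' y, ENNReal.ofReal (4 * M * b' x y))
            = ∑' y, ENNReal.ofReal (4 * M) * ENNReal.ofReal (b' x y) :=
              tsum_congr fun y => ENNReal.ofReal_mul (by positivity)
          _ = ENNReal.ofReal (4 * M) * ∑' y, ENNReal.ofReal (b' x y) :=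
              ENNReal.tsum_mul_left
          _ = ENNReal.ofReal (4 * M) * ENNReal.ofReal (∑' y, b' x y) := by
              rw [tsum_ofReal_eq (fun y => hb0 x y) (hbs x)]
      · simp [hx]
    calc (∑' (x : V) (y : V), if x ∈ F then ENNReal.ofReal (4 * M * b' x y) else 0)
        = ∑' x : V, if x ∈ F then ENNReal.ofReal (4 * M) * ENNReal.ofReal (∑' y, b' x y)
            else 0 := by
          exact tsum_congr hrw
      _ = ∑ x ∈ F, ENNReal.ofReal (4 * M) * ENNReal.ofReal (∑' y, b' x y) := by
          rw [tsum_eq_sum (s := F) (fun x hx => by simp [hx])]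
          exact Finset.sum_congr rfl fun x hx => by simp [hx]
      _ < ⊤ := by
          refine ENNReal.sum_lt_top.2 fun x _ => ?_
          exact ENNReal.mul_lt_top ENNReal.ofReal_lt_top ENNReal.ofReal_lt_top
  have h1 : G.e1 u ≠ ⊤ := by
    have key : ∀ p : V × V, ENNReal.ofReal (G.b p.1 p.2 * (u p.1 - u p.2) ^ 2)
        ≤ (if p.1 ∈ F then ENNReal.ofReal (4 * M * G.b p.1 p.2) else 0)
          + (if p.2 ∈ F then ENNReal.ofReal (4 * M * G.b p.1 p.2) else 0) := by
      intro p
      have hb := G.b_nonneg p.1 p.2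
      by_cases h1 : p.1 ∈ F
      · refine le_trans ?_ le_self_add
        simp only [h1, if_true]
        refine ENNReal.ofReal_le_ofReal ?_
        nlinarith [hMle p.1, hMle p.2, sq_nonneg (u p.1 + u p.2)]
      · by_cases h2 : p.2 ∈ F
        · refine le_trans ?_ le_add_self
          simp only [h2, if_true]
          refine ENNReal.ofReal_le_ofReal ?_
          nlinarith [hMle p.1, hMle p.2, sq_nonneg (u p.1 + u p.2)]
        · rw [hFmem _ h1, hFmem _ h2]
          simp
    have hle : G.e1 u ≤
        (∑' p : V × V, if p.1 ∈ F then ENNReal.ofReal (4 * M * G.b p.1 p.2) else 0)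
        + ∑' p : V × V, if p.2 ∈ F then ENNReal.ofReal (4 * M * G.b p.1 p.2) else 0 := by
      rw [← ENNReal.tsum_add]
      exact ENNReal.tsum_le_tsum key
    have hsecond : (∑' p : V × V, if p.2 ∈ F then ENNReal.ofReal (4 * M * G.b p.1 p.2) else 0)
        = ∑' p : V × V, if p.1 ∈ F then ENNReal.ofReal (4 * M * G.b p.1 p.2) else 0 := by
      rw [← (Equiv.prodComm V V).tsum_eq
        (fun p : V × V => if p.1 ∈ F then ENNReal.ofReal (4 * M * G.b p.1 p.2) else 0)]
      refine tsum_congr fun p => ?_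
      simp only [Equiv.prodComm_apply, Prod.fst_swap, Prod.snd_swap]
      rw [G.b_symm p.1 p.2]
      congr 1
    rw [hsecond] at hle
    refine ne_top_of_le_ne_top ?_ hle
    exact (ENNReal.add_lt_top.2 ⟨aux G.b G.b_nonneg G.b_summable,
      aux G.b G.b_nonneg G.b_summable⟩).ne
  have h2 : G.e2 u ≠ ⊤ := by
    have : G.e2 u = ∑ x ∈ F, ENNReal.ofReal (G.c x * u x ^ 2) := by
      refine tsum_eq_sum fun x hx => ?_
      rw [hFmem x hx]
      simp
    rw [this]
    exact (ENNReal.sum_lt_top.2 fun x _ => ENNReal.ofReal_lt_top).ne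
  exact G.finiteEnergy_of_parts h1 h2

end NeumannHelpers

/-- the Neumann form `Q^(N)` on `D(Q^(N)) = D̃ ∩ ℓ²(V,m)` is a Dirichlet
form: nonnegative, symmetric, densely defined, closed, and Markovian. -/
theorem neumann_form_is_dirichlet {V : Type*} [Countable V] (G : WeightedGraph V)
    (m : V → ℝ) (hm : ∀ x, 0 < m x) :
    -- nonnegative
    (∀ u : V → ℝ, G.FiniteEnergy u ∧ MemL2 m u → 0 ≤ G.energyBilin u u) ∧
    -- symmetric
    (∀ u v : V → ℝ, G.FiniteEnergy u ∧ MemL2 m u → G.FiniteEnergy v ∧ MemL2 m v →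
      G.energyBilin u v = G.energyBilin v u) ∧
    -- densely defined in ℓ²(V,m)
    (∀ f : V → ℝ, MemL2 m f → ∀ ε > (0 : ℝ),
      ∃ u : V → ℝ, (G.FiniteEnergy u ∧ MemL2 m u) ∧ ∑' x, (f x - u x) ^ 2 * m x < ε) ∧
    -- closed: Cauchy sequences in the form norm converge in the form norm within the domain
    (∀ f : ℕ → V → ℝ, (∀ n, G.FiniteEnergy (f n) ∧ MemL2 m (f n)) →
      (∀ ε > (0 : ℝ), ∃ N, ∀ p ≥ N, ∀ q ≥ N,
        (G.energy (fun x => f p x - f q x)).toReal + ∑' x, (f p x - f q x) ^ 2 * m x < ε) →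
      ∃ u : V → ℝ, (G.FiniteEnergy u ∧ MemL2 m u) ∧
        Filter.Tendsto
          (fun n => (G.energy (fun x => f n x - u x)).toReal + ∑' x, (f n x - u x) ^ 2 * m x)
          Filter.atTop (nhds 0)) ∧
    -- Markov property
    (∀ C : ℝ → ℝ, C 0 = 0 → (∀ a b : ℝ, |C a - C b| ≤ |a - b|) →
      ∀ u : V → ℝ, G.FiniteEnergy u ∧ MemL2 m u →
        (G.FiniteEnergy (fun x => C (u x)) ∧ MemL2 m (fun x => C (u x))) ∧
          G.energyBilin (fun x => C (u x)) (fun x => C (u x)) ≤ G.energyBilin u u) := by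
  classical
  refine ⟨?_, ?_, ?_, ?_, ?_⟩
  · -- nonnegativity
    intro u _
    unfold WeightedGraph.energyBilin
    have h1 : 0 ≤ ∑' p : V × V, G.b p.1 p.2 * (u p.1 - u p.2) * (u p.1 - u p.2) :=
      tsum_nonneg fun p => by
        have hb := G.b_nonneg p.1 p.2
        nlinarith [mul_self_nonneg (u p.1 - u p.2)]
    have h2 : 0 ≤ ∑' x, G.c x * u x * u x :=
      tsum_nonneg fun x => by
        have hc := G.c_nonneg x
        nlinarith [mul_self_nonneg (u x)]
    linarith
  · -- symmetry
    intro u v _ _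
    unfold WeightedGraph.energyBilin
    have h1 : (∑' p : V × V, G.b p.1 p.2 * (u p.1 - u p.2) * (v p.1 - v p.2))
        = ∑' p : V × V, G.b p.1 p.2 * (v p.1 - v p.2) * (u p.1 - u p.2) :=
      tsum_congr fun p => by ring
    have h2 : (∑' x, G.c x * u x * v x) = ∑' x, G.c x * v x * u x :=
      tsum_congr fun x => by ring
    rw [h1, h2]
  · -- density
    intro f hf ε hε
    have htend := tendsto_tsum_compl_atTop_zero (G := ℝ) fun x => f x ^ 2 * m x
    obtain ⟨F, hF⟩ := (htend.eventually_lt_const hε).exists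
    refine ⟨fun x => if x ∈ F then f x else 0, ⟨?_, ?_⟩, ?_⟩
    · refine G.finiteEnergy_of_finite_support _ (Set.Finite.subset F.finite_toSet ?_)
      intro x hx
      simp only [Function.mem_support] at hx
      by_contra hxF
      simp only [Finset.mem_coe] at hxF
      simp [hxF] at hx
    · refine summable_of_ne_finset_zero (s := F) fun x hx => ?_
      simp [hx]
    · have key : (∑' x, (f x - (if x ∈ F then f x else 0)) ^ 2 * m x)
          = ∑' x : {x : V // x ∉ F}, (f x ^ 2 * m x) := by
        have hpt : ∀ x : V, (f x - (if x ∈ F then f x else 0)) ^ 2 * m x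
            = Set.indicator {y : V | y ∉ F} (fun y => f y ^ 2 * m y) x := by
          intro x
          by_cases hx : x ∈ F <;> simp [hx, Set.indicator]
        rw [tsum_congr hpt, ← tsum_subtype]
        rfl
      rw [key]
      exact hF
  · -- closedness
    intro f hf hC
    have hdiffL2 : ∀ p q, MemL2 m fun x => f p x - f q x :=
      fun p q => memL2_sub hm (hf p).2 (hf q).2
    have hdiffFE : ∀ p q, G.FiniteEnergy fun x => f p x - f q x :=
      fun p q => G.finiteEnergy_sub (hf p).1 (hf q).1
    have hcauchy : ∀ x : V, CauchySeq fun n => f n x := by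
      intro x
      rw [Metric.cauchySeq_iff]
      intro ε hε
      obtain ⟨N, hN⟩ := hC (ε ^ 2 * m x) (mul_pos (pow_pos hε 2) (hm x))
      refine ⟨N, fun p hp q hq => ?_⟩
      have h1 := hN p hp q hq
      have h2 : (f p x - f q x) ^ 2 * m x ≤ ∑' y, (f p y - f q y) ^ 2 * m y := by
        simpa using (hdiffL2 p q).le_tsum x fun y _ =>
          mul_nonneg (sq_nonneg _) (hm y).le
      have h3 : 0 ≤ (G.energy fun y => f p y - f q y).toReal := ENNReal.toReal_nonneg
      have h4 : (f p x - f q x) ^ 2 * m x < ε ^ 2 * m x := by linarith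
      have h5 : (f p x - f q x) ^ 2 < ε ^ 2 := lt_of_mul_lt_mul_right h4 (hm x).le
      rw [Real.dist_eq]
      nlinarith [abs_nonneg (f p x - f q x), sq_abs (f p x - f q x)]
    have hlim : ∀ x, ∃ l, Tendsto (fun n => f n x) atTop (nhds l) :=
      fun x => cauchySeq_tendsto_of_complete (hcauchy x)
    choose u hu using hlim
    have hof2 : ∀ r : ℝ, ENNReal.ofReal (2 * r) = 2 * ENNReal.ofReal r := by
      intro r
      rw [ENNReal.ofReal_mul (by norm_num)]
      norm_num
    have key : ∀ ε > (0:ℝ), ∃ N, ∀ n ≥ N,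
        G.energy (fun x => f n x - u x) ≤ ENNReal.ofReal (3 * ε) ∧
        (∑' x, ENNReal.ofReal ((f n x - u x) ^ 2 * m x)) ≤ ENNReal.ofReal ε := by
      intro ε hε
      obtain ⟨N, hN⟩ := hC ε hε
      refine ⟨N, fun n hn => ?_⟩
      have hbound : ∀ q ≥ N,
          G.e1 (fun x => f n x - f q x) ≤ ENNReal.ofReal (2 * ε) ∧
          G.e2 (fun x => f n x - f q x) ≤ ENNReal.ofReal ε ∧
          (∑' x, ENNReal.ofReal ((f n x - f q x) ^ 2 * m x)) ≤ ENNReal.ofReal ε := by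
        intro q hq
        have h1 := hN n hn q hq
        have hFEd := hdiffFE n q
        have hL2d := hdiffL2 n q
        have hl2nn : 0 ≤ ∑' x, (f n x - f q x) ^ 2 * m x :=
          tsum_nonneg fun x => mul_nonneg (sq_nonneg _) (hm x).le
        have hE : (G.energy fun x => f n x - f q x).toReal < ε := by linarith
        have hEofReal : (G.energy fun x => f n x - f q x) < ENNReal.ofReal ε :=
          (ENNReal.lt_ofReal_iff_toReal_lt hFEd.ne).2 hE
        refine ⟨?_, ?_, ?_⟩
        · have h2 : (2:ℝ≥0∞) * (1/2) = 1 := by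
            rw [one_div, ENNReal.mul_inv_cancel (by norm_num) (by norm_num)]
          have he1 : G.e1 (fun x => f n x - f q x)
              ≤ 2 * G.energy (fun x => f n x - f q x) := by
            rw [G.energy_eq, mul_add]
            calc G.e1 (fun x => f n x - f q x)
                = 2 * ((1/2) * G.e1 (fun x => f n x - f q x)) := by
                  rw [← mul_assoc, h2, one_mul]
              _ ≤ _ := le_self_add
          refine he1.trans ?_
          rw [hof2]
          exact mul_le_mul_right hEofReal.le 2
        · refine le_trans ?_ hEofReal.le
          rw [G.energy_eq]
          exact le_add_self
        · rw [tsum_ofReal_eq (fun x => mul_nonneg (sq_nonneg _) (hm x).le) hL2d]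
          have h3 : 0 ≤ (G.energy fun x => f n x - f q x).toReal := ENNReal.toReal_nonneg
          exact ENNReal.ofReal_le_ofReal (by linarith)
      -- Fatou for the three pieces
      have fatou1 : G.e1 (fun x => f n x - u x)
          ≤ Filter.atTop.liminf fun q => G.e1 (fun x => f n x - f q x) := by
        have hpt : ∀ p : V × V,
            Tendsto (fun q => ENNReal.ofReal (G.b p.1 p.2 *
                ((f n p.1 - f q p.1) - (f n p.2 - f q p.2)) ^ 2)) atTop
              (nhds (ENNReal.ofReal (G.b p.1 p.2 *
                ((f n p.1 - u p.1) - (f n p.2 - u p.2)) ^ 2))) := by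
          intro p
          have t1 : Tendsto (fun q => (f n p.1 - f q p.1) - (f n p.2 - f q p.2)) atTop
              (nhds ((f n p.1 - u p.1) - (f n p.2 - u p.2))) :=
            (tendsto_const_nhds.sub (hu p.1)).sub (tendsto_const_nhds.sub (hu p.2))
          exact (ENNReal.continuous_ofReal.tendsto _).comp ((t1.pow 2).const_mul _)
        calc G.e1 (fun x => f n x - u x)
            = ∑' p : V × V, Filter.atTop.liminf fun q =>
                ENNReal.ofReal (G.b p.1 p.2 *
                  ((f n p.1 - f q p.1) - (f n p.2 - f q p.2)) ^ 2) :=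
              tsum_congr fun p => ((hpt p).liminf_eq).symm
          _ ≤ _ := tsum_liminf_le_liminf_tsum _
      have fatou2 : G.e2 (fun x => f n x - u x)
          ≤ Filter.atTop.liminf fun q => G.e2 (fun x => f n x - f q x) := by
        have hpt : ∀ x : V,
            Tendsto (fun q => ENNReal.ofReal (G.c x * (f n x - f q x) ^ 2)) atTop
              (nhds (ENNReal.ofReal (G.c x * (f n x - u x) ^ 2))) := by
          intro x
          have t1 : Tendsto (fun q => f n x - f q x) atTop (nhds (f n x - u x)) :=
            tendsto_const_nhds.sub (hu x)
          exact (ENNReal.continuous_ofReal.tendsto _).comp ((t1.pow 2).const_mul _)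
        calc G.e2 (fun x => f n x - u x)
            = ∑' x : V, Filter.atTop.liminf fun q =>
                ENNReal.ofReal (G.c x * (f n x - f q x) ^ 2) :=
              tsum_congr fun x => ((hpt x).liminf_eq).symm
          _ ≤ _ := tsum_liminf_le_liminf_tsum _
      have fatou3 : (∑' x, ENNReal.ofReal ((f n x - u x) ^ 2 * m x))
          ≤ Filter.atTop.liminf fun q =>
              ∑' x, ENNReal.ofReal ((f n x - f q x) ^ 2 * m x) := by
        have hpt : ∀ x : V,
            Tendsto (fun q => ENNReal.ofReal ((f n x - f q x) ^ 2 * m x)) atTop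
              (nhds (ENNReal.ofReal ((f n x - u x) ^ 2 * m x))) := by
          intro x
          have t1 : Tendsto (fun q => f n x - f q x) atTop (nhds (f n x - u x)) :=
            tendsto_const_nhds.sub (hu x)
          exact (ENNReal.continuous_ofReal.tendsto _).comp ((t1.pow 2).mul_const _)
        calc (∑' x, ENNReal.ofReal ((f n x - u x) ^ 2 * m x))
            = ∑' x : V, Filter.atTop.liminf fun q =>
                ENNReal.ofReal ((f n x - f q x) ^ 2 * m x) :=
              tsum_congr fun x => ((hpt x).liminf_eq).symm
          _ ≤ _ := tsum_liminf_le_liminf_tsum _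
      have lim1 : (Filter.atTop.liminf fun q => G.e1 (fun x => f n x - f q x))
          ≤ ENNReal.ofReal (2 * ε) :=
        Filter.liminf_le_of_frequently_le'
          ((eventually_atTop.2 ⟨N, fun q hq => (hbound q hq).1⟩).frequently)
      have lim2 : (Filter.atTop.liminf fun q => G.e2 (fun x => f n x - f q x))
          ≤ ENNReal.ofReal ε :=
        Filter.liminf_le_of_frequently_le'
          ((eventually_atTop.2 ⟨N, fun q hq => (hbound q hq).2.1⟩).frequently)
      have lim3 : (Filter.atTop.liminf fun q =>
            ∑' x, ENNReal.ofReal ((f n x - f q x) ^ 2 * m x))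
          ≤ ENNReal.ofReal ε :=
        Filter.liminf_le_of_frequently_le'
          ((eventually_atTop.2 ⟨N, fun q hq => (hbound q hq).2.2⟩).frequently)
      constructor
      · rw [G.energy_eq]
        have half : (1/2 : ℝ≥0∞) * G.e1 (fun x => f n x - u x)
            ≤ G.e1 (fun x => f n x - u x) := by
          calc (1/2 : ℝ≥0∞) * G.e1 (fun x => f n x - u x)
              ≤ 1 * G.e1 (fun x => f n x - u x) := mul_le_mul_left (by norm_num) _
            _ = _ := one_mul _
        calc (1/2) * G.e1 (fun x => f n x - u x) + G.e2 (fun x => f n x - u x)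
            ≤ G.e1 (fun x => f n x - u x) + G.e2 (fun x => f n x - u x) :=
              add_le_add_left half _
          _ ≤ ENNReal.ofReal (2 * ε) + ENNReal.ofReal ε :=
              add_le_add (fatou1.trans lim1) (fatou2.trans lim2)
          _ = ENNReal.ofReal (3 * ε) := by
              rw [← ENNReal.ofReal_add (by positivity) hε.le]
              ring_nf
      · exact fatou3.trans lim3
    -- membership of u in the domain
    obtain ⟨N₀, hN₀⟩ := key 1 one_pos
    have hFEdiff : G.FiniteEnergy (fun x => f N₀ x - u x) :=
      lt_of_le_of_lt (hN₀ N₀ le_rfl).1 ENNReal.ofReal_lt_top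
    have hL2diff : MemL2 m (fun x => f N₀ x - u x) := by
      refine summable_of_tsum_ofReal_ne_top
        (fun x => mul_nonneg (sq_nonneg _) (hm x).le) ?_
      exact ne_top_of_le_ne_top ENNReal.ofReal_ne_top (hN₀ N₀ le_rfl).2
    have hFEu : G.FiniteEnergy u := by
      have h := G.finiteEnergy_sub (hf N₀).1 hFEdiff
      simpa using h
    have hL2u : MemL2 m u := by
      have h := memL2_sub hm (hf N₀).2 hL2diff
      simpa [MemL2] using h
    refine ⟨u, ⟨hFEu, hL2u⟩, ?_⟩
    rw [Metric.tendsto_atTop]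
    intro ε hε
    obtain ⟨N, hN⟩ := key (ε/5) (by positivity)
    refine ⟨N, fun n hn => ?_⟩
    obtain ⟨hEn, hLn⟩ := hN n hn
    have hE' : (G.energy fun x => f n x - u x).toReal ≤ 3 * (ε/5) :=
      ENNReal.toReal_le_of_le_ofReal (by positivity) hEn
    have hsumn : Summable fun x => (f n x - u x) ^ 2 * m x := by
      refine summable_of_tsum_ofReal_ne_top
        (fun x => mul_nonneg (sq_nonneg _) (hm x).le) ?_
      exact ne_top_of_le_ne_top ENNReal.ofReal_ne_top hLn
    have hL' : (∑' x, (f n x - u x) ^ 2 * m x) ≤ ε/5 := by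
      rw [tsum_ofReal_eq (fun x => mul_nonneg (sq_nonneg _) (hm x).le) hsumn] at hLn
      exact (ENNReal.ofReal_le_ofReal_iff (by positivity)).1 hLn
    have hnn : 0 ≤ (G.energy fun x => f n x - u x).toReal
        + ∑' x, (f n x - u x) ^ 2 * m x :=
      add_nonneg ENNReal.toReal_nonneg
        (tsum_nonneg fun x => mul_nonneg (sq_nonneg _) (hm x).le)
    rw [Real.dist_eq, sub_zero, abs_of_nonneg hnn]
    linarith
  · -- Markov property
    intro C hC0 hC u ⟨hFE, hL2⟩
    have habs : ∀ a : ℝ, |C a| ≤ |a| := by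
      intro a
      have h := hC a 0
      rwa [hC0, sub_zero, sub_zero] at h
    have hsq : ∀ a : ℝ, C a ^ 2 ≤ a ^ 2 := by
      intro a
      rw [← sq_abs (C a), ← sq_abs a]
      exact pow_le_pow_left₀ (abs_nonneg _) (habs a) 2
    have hdsq : ∀ a b : ℝ, (C a - C b) ^ 2 ≤ (a - b) ^ 2 := by
      intro a b
      rw [← sq_abs (C a - C b), ← sq_abs (a - b)]
      exact pow_le_pow_left₀ (abs_nonneg _) (hC a b) 2
    have hFEC : G.FiniteEnergy fun x => C (u x) := by
      refine G.finiteEnergy_of_parts ?_ ?_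
      · refine ne_top_of_le_ne_top (G.e1_ne_top hFE)
          (ENNReal.tsum_le_tsum fun p => ENNReal.ofReal_le_ofReal ?_)
        exact mul_le_mul_of_nonneg_left (hdsq _ _) (G.b_nonneg p.1 p.2)
      · refine ne_top_of_le_ne_top (G.e2_ne_top hFE)
          (ENNReal.tsum_le_tsum fun x => ENNReal.ofReal_le_ofReal ?_)
        exact mul_le_mul_of_nonneg_left (hsq _) (G.c_nonneg x)
    have hL2C : MemL2 m fun x => C (u x) := by
      refine Summable.of_nonneg_of_le
        (fun x => mul_nonneg (sq_nonneg _) (hm x).le) (fun x => ?_) hL2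
      exact mul_le_mul_of_nonneg_right (hsq _) (hm x).le
    refine ⟨⟨hFEC, hL2C⟩, ?_⟩
    unfold WeightedGraph.energyBilin
    have hsum1u : Summable fun p : V × V =>
        G.b p.1 p.2 * (u p.1 - u p.2) * (u p.1 - u p.2) :=
      (G.summable_e1 hFE).congr fun p => by ring
    have hsum1C : Summable fun p : V × V =>
        G.b p.1 p.2 * (C (u p.1) - C (u p.2)) * (C (u p.1) - C (u p.2)) := by
      refine Summable.of_nonneg_of_le (fun p => ?_) (fun p => ?_) hsum1u
      · have hb := G.b_nonneg p.1 p.2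
        nlinarith [mul_self_nonneg (C (u p.1) - C (u p.2))]
      · have hb := G.b_nonneg p.1 p.2
        have := mul_le_mul_of_nonneg_left (hdsq (u p.1) (u p.2)) hb
        nlinarith
    have hsum2u : Summable fun x => G.c x * u x * u x :=
      (G.summable_e2 hFE).congr fun x => by ring
    have hsum2C : Summable fun x => G.c x * C (u x) * C (u x) := by
      refine Summable.of_nonneg_of_le (fun x => ?_) (fun x => ?_) hsum2u
      · have hc := G.c_nonneg x
        nlinarith [mul_self_nonneg (C (u x))]
      · have hc := G.c_nonneg x
        have := mul_le_mul_of_nonneg_left (hsq (u x)) hc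
        nlinarith
    have ht1 : (∑' p : V × V, G.b p.1 p.2 * (C (u p.1) - C (u p.2))
          * (C (u p.1) - C (u p.2)))
        ≤ ∑' p : V × V, G.b p.1 p.2 * (u p.1 - u p.2) * (u p.1 - u p.2) := by
      refine Summable.tsum_le_tsum (fun p => ?_) hsum1C hsum1u
      have hb := G.b_nonneg p.1 p.2
      have := mul_le_mul_of_nonneg_left (hdsq (u p.1) (u p.2)) hb
      nlinarith
    have ht2 : (∑' x, G.c x * C (u x) * C (u x)) ≤ ∑' x, G.c x * u x * u x := by
      refine Summable.tsum_le_tsum (fun x => ?_) hsum2C hsum2u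
      have hc := G.c_nonneg x
      have := mul_le_mul_of_nonneg_left (hsq (u x)) hc
      nlinarith
    have h12 : (0:ℝ) ≤ 1/2 := by norm_num
    exact add_le_add (mul_le_mul_of_nonneg_left ht1 h12) ht2
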